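/- Let F = (A, R) and G = (A, R') be argumentation frameworks on the same set of arguments with R ⊆ R' and conf(F) = conf(G). If S is a cf1.5-extension of F, then S is a cf1.5-extension of G. (In particular, cf1.5 satisfies ⪯ᴱ∩- and ⪯ᴱ_W-skepticism adequacy.) -/

import Mathlib

/-!
Basic notions of abstract argumentation frameworks, following
Andrews–San Mauro, "SCC-recursiveness in infinite argumentation".
-/

universe u

/-- An argumentation framework: a set `A` of arguments together with an
attack relation `R ⊆ A × A`. -/
structure AF (α : Type u) where
  A : Set α
  R : α → α → Prop
  attack_mem : ∀ ⦃a b : α⦄, R a b → a ∈ A ∧ b ∈ A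

namespace AF

variable {α : Type u}

/-- The restriction `F↾U = (A ∩ U, R ∩ (U × U))`. -/
def restrict (F : AF α) (U : Set α) : AF α where
  A := F.A ∩ U
  R a b := F.R a b ∧ a ∈ U ∧ b ∈ U
  attack_mem := by
    intro a b h
    exact ⟨⟨(F.attack_mem h.1).1, h.2.1⟩, ⟨(F.attack_mem h.1).2, h.2.2⟩⟩

/-- `S` is conflict-free: `S ⊆ A` and no argument of `S` attacks another. -/
def ConflictFree (F : AF α) (S : Set α) : Prop :=
  S ⊆ F.A ∧ ∀ a ∈ S, ∀ b ∈ S, ¬ F.R a b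

/-- `S` is a naive extension: conflict-free and ⊆-maximal among conflict-free sets. -/
def Naive (F : AF α) (S : Set α) : Prop :=
  ConflictFree F S ∧ ∀ T, ConflictFree F T → S ⊆ T → S = T

/-- `S⁺`: the set of arguments attacked by `S`. -/
def plus (F : AF α) (S : Set α) : Set α := {x | ∃ y ∈ S, F.R y x}

/-- The range `S⊕ = S ∪ S⁺`. -/
def rng (F : AF α) (S : Set α) : Set α := S ∪ plus F S

/-- `S` is a stage extension: conflict-free with ⊆-maximal range among
conflict-free sets. -/
def Stage (F : AF α) (S : Set α) : Prop :=
  ConflictFree F S ∧ ¬ ∃ T, ConflictFree F T ∧ rng F S ⊂ rng F T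

/-- `F` is finitary: every argument has finitely many attackers. -/
def Finitary (F : AF α) : Prop := ∀ a, {x | F.R x a}.Finite

/-- There is a directed path from `a` to `b` in `F` (both being arguments of `F`). -/
def Reach (F : AF α) (a b : α) : Prop :=
  a ∈ F.A ∧ b ∈ F.A ∧ Relation.ReflTransGen F.R a b

/-- The strongly connected component of `a` in `F`. -/
def SCCof (F : AF α) (a : α) : Set α := {b | Reach F a b ∧ Reach F b a}

/-- `X` is a strongly connected component of `F`. -/
def IsSCC (F : AF α) (X : Set α) : Prop := ∃ a ∈ F.A, X = SCCof F a

/-- `D_S(X)`: the elements of `X` attacked by an element of `S` outside `X`. -/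
def Dset (F : AF α) (S X : Set α) : Set α := {b ∈ X | ∃ a ∈ S \ X, F.R a b}

/-- `S` is a cf1.5-extension of `F`. -/
def CF15 (F : AF α) (S : Set α) : Prop :=
  ConflictFree F S ∧
    ∀ X, IsSCC F X → Naive (F.restrict (X \ Dset F S X)) (S ∩ X)

/-- `S` is a stg1.5-extension of `F`. -/
def STG15 (F : AF α) (S : Set α) : Prop :=
  ConflictFree F S ∧
    ∀ X, IsSCC F X → Stage (F.restrict (X \ Dset F S X)) (S ∩ X)

/-- `C_S^α(a)`, defined by transfinite recursion. -/
noncomputable def Cseq (F : AF α) (S : Set α) (a : α) (o : Ordinal.{0}) : Set α :=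
  Ordinal.limitRecOn o (SCCof F a)
    (fun _ C => SCCof (F.restrict (C \ Dset F S C)) a)
    (fun o' _ ih => SCCof (F.restrict (⋂ β : {β : Ordinal.{0} // β < o'}, ih β.1 β.2)) a)

/-- The component ordinal `α_S(a)`: the least `α` with `a ∉ C_S^α(a)` or
`C_S^{α+1}(a) = C_S^α(a)`. -/
noncomputable def alphaS (F : AF α) (S : Set α) (a : α) : Ordinal.{0} :=
  sInf {o | a ∉ Cseq F S a o ∨ Cseq F S a (o + 1) = Cseq F S a o}

/-- `S` is an icft-extension (tfcf2-extension) of `F`. -/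
def ICFT (F : AF α) (S : Set α) : Prop :=
  ConflictFree F S ∧ ∀ a ∈ F.A,
    a ∉ Cseq F S a (alphaS F S a) ∨
      Naive (F.restrict (Cseq F S a (alphaS F S a))) (S ∩ Cseq F S a (alphaS F S a))

/-- `S` is an istgt-extension (tf-stg2-extension) of `F`. -/
def ISTGT (F : AF α) (S : Set α) : Prop :=
  ConflictFree F S ∧ ∀ a ∈ F.A,
    a ∉ Cseq F S a (alphaS F S a) ∨
      Stage (F.restrict (Cseq F S a (alphaS F S a))) (S ∩ Cseq F S a (alphaS F S a))

/-- The characteristic function `f_F`. -/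
def charF (F : AF α) (S : Set α) : Set α :=
  {x ∈ F.A | ∀ y, F.R y x → ∃ z ∈ S, F.R z y}

/-- `G` is the grounded extension of `F`: the least fixed point of `f_F`. -/
def IsGrounded (F : AF α) (G : Set α) : Prop :=
  charF F G = G ∧ ∀ T, charF F T = T → G ⊆ T

/-- `conf(F)`: the set of conflicting pairs of `F`. -/
def confl (F : AF α) : Set (α × α) := {p | F.R p.1 p.2 ∨ F.R p.2 p.1}

/-- The operator `Δ_{F,S}(D)`. -/
def DeltaOp (F : AF α) (S D : Set α) : Set α :=
  {a ∈ F.A | ∃ b ∈ S, F.R b a ∧ ¬ Reach (F.restrict (F.A \ D)) a b}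

/-- `Δ^α_{F,S}`, defined by transfinite recursion. -/
noncomputable def Deltaseq (F : AF α) (S : Set α) (o : Ordinal.{0}) : Set α :=
  Ordinal.limitRecOn o (∅ : Set α)
    (fun _ D => DeltaOp F S D)
    (fun o' _ ih => ⋃ β : {β : Ordinal.{0} // β < o'}, ih β.1 β.2)

/-- The least fixed point `Δ_{F,S}` of the monotone operator `Δ_{F,S}(·)`,
given by Knaster–Tarski as the intersection of all prefixed points. -/
def DeltaFix (F : AF α) (S : Set α) : Set α :=
  ⋂₀ {D | DeltaOp F S D ⊆ D}

end AF

/-- cf1.5 skepticism adequacy transfer. -/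
theorem statement15 {α : Type u} (F G : AF α) (hA : F.A = G.A)
    (hR : ∀ a b, F.R a b → G.R a b) (hconf : AF.confl F = AF.confl G)
    (S : Set α) (hS : AF.CF15 F S) : AF.CF15 G S := by
  obtain ⟨⟨hSA, hScf⟩, hSCC⟩ := hS
  -- Every G-attack is an F-conflict.
  have key : ∀ a b, G.R a b → F.R a b ∨ F.R b a := by
    intro a b h
    have hmem : (a, b) ∈ AF.confl G := Or.inl h
    rw [← hconf] at hmem
    exact hmem
  have hScfG : ∀ a ∈ S, ∀ b ∈ S, ¬ G.R a b := by
    intro a ha b hb h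
    rcases key a b h with h' | h'
    · exact hScf a ha b hb h'
    · exact hScf b hb a ha h'
  refine ⟨⟨hA ▸ hSA, hScfG⟩, ?_⟩
  intro X hX
  obtain ⟨x0, hx0A, rfl⟩ := hX
  set X := AF.SCCof G x0 with hXdef
  set U := X \ AF.Dset G S X with hUdef
  -- Members of S in X are not in D^G_S(X).
  have hSU : S ∩ X ⊆ U := by
    rintro b ⟨hbS, hbX⟩
    refine ⟨hbX, ?_⟩
    rintro ⟨-, c, ⟨hcS, -⟩, hRcb⟩
    exact hScfG c hcS b hbS hRcb
  -- Conflict-freeness of S ∩ X in the restriction.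
  have hcfGU : AF.ConflictFree (G.restrict U) (S ∩ X) := by
    constructor
    · intro b hb
      exact ⟨hA ▸ hSA hb.1, hSU hb⟩
    · intro a ha b hb hR
      exact hScfG a ha.1 b hb.1 hR.1
  refine ⟨hcfGU, ?_⟩
  intro T hTcf hsub
  refine Set.Subset.antisymm hsub ?_
  intro a haT
  have haAU : a ∈ G.A ∩ U := hTcf.1 haT
  have haA : a ∈ F.A := hA ▸ haAU.1
  have haU : a ∈ U := haAU.2
  have haX : a ∈ X := haU.1
  -- The F-SCC of a is contained in X.
  have hreachFG : ∀ x y, AF.Reach F x y → AF.Reach G x y := by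
    intro x y hr
    exact ⟨hA ▸ hr.1, hA ▸ hr.2.1, Relation.ReflTransGen.mono hR x y hr.2.2⟩
  set Y := AF.SCCof F a with hYdef
  have hYX : Y ⊆ X := by
    intro b hb
    have h1 : AF.Reach G a b := hreachFG a b hb.1
    have h2 : AF.Reach G b a := hreachFG b a hb.2
    rcases haX with ⟨hx0a, hax0⟩
    exact ⟨⟨hx0a.1, h1.2.1, hx0a.2.2.trans h1.2.2⟩,
           ⟨h2.1, hax0.2.1, h2.2.2.trans hax0.2.2⟩⟩
  have hnaive := hSCC Y ⟨a, haA, rfl⟩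
  by_cases hD : a ∈ AF.Dset F S Y
  · -- a is attacked in F by some c ∈ S \ Y
    obtain ⟨-, c, ⟨hcS, hcY⟩, hRca⟩ := hD
    have hGca : G.R c a := hR c a hRca
    by_cases hcX : c ∈ X
    · have hcT : c ∈ T := hsub ⟨hcS, hcX⟩
      exact absurd (⟨hGca, hSU ⟨hcS, hcX⟩, haU⟩ : (G.restrict U).R c a) (hTcf.2 c hcT a haT)
    · exact absurd (⟨haX, c, ⟨hcS, hcX⟩, hGca⟩ : a ∈ AF.Dset G S X) haU.2
  · -- a survives in F↾(Y \ D^F_S(Y)); use naiveness of S ∩ Y there.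
    set V := Y \ AF.Dset F S Y with hVdef
    have haY : a ∈ Y := ⟨⟨haA, haA, Relation.ReflTransGen.refl⟩,
                         ⟨haA, haA, Relation.ReflTransGen.refl⟩⟩
    have haV : a ∈ V := ⟨haY, hD⟩
    have hSYV : S ∩ Y ⊆ V := by
      rintro b ⟨hbS, hbY⟩
      refine ⟨hbY, ?_⟩
      rintro ⟨-, c, ⟨hcS, -⟩, hRcb⟩
      exact hScf c hcS b hbS hRcb
    -- the candidate set (S ∩ Y) ∪ {a} is conflict-free in F↾V
    have hT' : AF.ConflictFree (F.restrict V) (S ∩ Y ∪ {a}) := by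
      constructor
      · rintro b (hb | hb)
        · exact ⟨hSA hb.1, hSYV hb⟩
        · rcases hb with rfl; exact ⟨haA, haV⟩
      · rintro p hp q hq ⟨hRpq, -, -⟩
        rw [Set.mem_union, Set.mem_singleton_iff] at hp hq
        rcases hp with hp | hp
        · rcases hq with hq | hq
          · exact hScf p hp.1 q hq.1 hRpq
          · rw [hq] at hRpq
            have hpT : p ∈ T := hsub ⟨hp.1, hYX hp.2⟩
            exact hTcf.2 p hpT a haT ⟨hR p a hRpq, hSU ⟨hp.1, hYX hp.2⟩, haU⟩
        · rw [hp] at hRpq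
          rcases hq with hq | hq
          · have hqT : q ∈ T := hsub ⟨hq.1, hYX hq.2⟩
            exact hTcf.2 a haT q hqT ⟨hR a q hRpq, haU, hSU ⟨hq.1, hYX hq.2⟩⟩
          · rw [hq] at hRpq
            exact hTcf.2 a haT a haT ⟨hR a a hRpq, haU, haU⟩
    have heq := hnaive.2 (S ∩ Y ∪ {a}) hT' Set.subset_union_left
    have haSY : a ∈ S ∩ Y := heq ▸ (Set.mem_union_right _ rfl)
    exact ⟨haSY.1, haX⟩
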